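/- Suppose dim(h_i) = 2 and vertex i is ρ̃-recurrent for some density ρ̃ on h_i. Then i is ρ-transient (i.e., ∫_0^∞ p_{ii;ρ}(t) dt < ∞) for at most one density ρ on h_i. -/

import Mathlib

open Matrix MeasureTheory ComplexOrder

/-- Embedding of an internal-state operator `ρ` at site `i` of the direct sum
`H = ⊕_{i ∈ V} h_i` (semifinite CTOQW with `h_i = ℂ^d`): this is `ρ ⊗ |i⟩⟨i|`. -/
def siteEmbed {V : Type*} [DecidableEq V] {d : ℕ} (i : V)
    (ρ : Matrix (Fin d) (Fin d) ℂ) : Matrix (V × Fin d) (V × Fin d) ℂ :=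
  fun a b => if a.1 = i ∧ b.1 = i then ρ a.2 b.2 else 0

/-- The projection `P_k = I ⊗ |k⟩⟨k|` onto the block of site `k`. -/
def siteProj {V : Type*} [DecidableEq V] (d : ℕ) (k : V) :
    Matrix (V × Fin d) (V × Fin d) ℂ :=
  Matrix.diagonal fun x => if x.1 = k then 1 else 0

/-- The `k`-th diagonal block of an operator on `⊕_{i ∈ V} ℂ^d`. -/
def siteBlock {V : Type*} {d : ℕ} (k : V) (X : Matrix (V × Fin d) (V × Fin d) ℂ) :
    Matrix (Fin d) (Fin d) ℂ :=
  fun x y => X (k, x) (k, y)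

/-- Transition probability `p_{ji;ρ}(t) = Tr(e^{tL}(ρ ⊗ |i⟩⟨i|)(I ⊗ |j⟩⟨j|))` of a CTOQW
whose semigroup `e^{tL}` is given by `T`. -/
noncomputable def transP {V : Type*} [Fintype V] [DecidableEq V] {d : ℕ}
    (T : ℝ → Matrix (V × Fin d) (V × Fin d) ℂ →ₗ[ℂ] Matrix (V × Fin d) (V × Fin d) ℂ)
    (j i : V) (ρ : Matrix (Fin d) (Fin d) ℂ) (t : ℝ) : ℝ :=
  ((T t (siteEmbed i ρ) * siteProj d j).trace).re

/-! ### Auxiliary lemmas -/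

section SpectralAux

lemma trace_eq_sum_eigenvalues {n : Type*} [Fintype n] [DecidableEq n]
    {M : Matrix n n ℂ} (hM : M.IsHermitian) :
    M.trace = ∑ i, (hM.eigenvalues i : ℂ) := by
  conv_lhs => rw [hM.spectral_theorem]
  rw [Unitary.conjStarAlgAut_apply, Matrix.trace_mul_cycle,
    Matrix.mem_unitaryGroup_iff'.mp (Matrix.IsHermitian.eigenvectorUnitary hM).2, Matrix.one_mul,
    Matrix.trace_diagonal]
  rfl

lemma diag_shift_eq {n : Type*} [Fintype n] [DecidableEq n] (f : n → ℝ) (r : ℝ) :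
    Matrix.diagonal (fun i => ((f i - r : ℝ) : ℂ)) =
      Matrix.diagonal (RCLike.ofReal ∘ f) - (r : ℂ) • 1 := by
  ext i j
  rcases eq_or_ne i j with rfl | hij
  · simp [Matrix.sub_apply, Matrix.smul_apply, Matrix.one_apply_eq]
  · simp [Matrix.diagonal_apply_ne _ hij, Matrix.sub_apply, Matrix.smul_apply,
      Matrix.one_apply_ne hij]

lemma conj_expand {n : Type*} [Fintype n] [DecidableEq n] (U D : Matrix n n ℂ) (r : ℂ) :
    U * (D - r • 1) * star U = U * D * star U - r • (U * star U) := by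
  rw [Matrix.mul_sub, Matrix.sub_mul, Matrix.mul_smul, Matrix.mul_one, Matrix.smul_mul]

lemma sub_smul_one_posSemidef {n : Type*} [Fintype n] [DecidableEq n]
    {M : Matrix n n ℂ} (hM : M.IsHermitian) {r : ℝ}
    (h : ∀ i, r ≤ hM.eigenvalues i) : (M - (r : ℂ) • 1).PosSemidef := by
  have hU : (hM.eigenvectorUnitary : Matrix n n ℂ) * star (hM.eigenvectorUnitary : Matrix n n ℂ)
      = 1 := Matrix.mem_unitaryGroup_iff.mp hM.eigenvectorUnitary.2
  have key : M - (r : ℂ) • 1 = (hM.eigenvectorUnitary : Matrix n n ℂ) *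
      Matrix.diagonal (fun i => ((hM.eigenvalues i - r : ℝ) : ℂ)) *
      star (hM.eigenvectorUnitary : Matrix n n ℂ) := by
    conv_lhs => rw [hM.spectral_theorem, Unitary.conjStarAlgAut_apply]
    rw [diag_shift_eq, conj_expand, hU]
  rw [key, Matrix.star_eq_conjTranspose]
  exact (Matrix.posSemidef_diagonal_iff.mpr
    (fun i => Complex.zero_le_real.mpr (by linarith [h i]))).mul_mul_conjTranspose_same _

lemma diag_shift_eq' {n : Type*} [Fintype n] [DecidableEq n] (f : n → ℝ) (r : ℝ) :
    Matrix.diagonal (fun i => ((r - f i : ℝ) : ℂ)) =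
      (r : ℂ) • 1 - Matrix.diagonal (RCLike.ofReal ∘ f) := by
  ext i j
  rcases eq_or_ne i j with rfl | hij
  · simp [Matrix.sub_apply, Matrix.smul_apply, Matrix.one_apply_eq]
  · simp [Matrix.diagonal_apply_ne _ hij, Matrix.sub_apply, Matrix.smul_apply,
      Matrix.one_apply_ne hij]

lemma conj_expand' {n : Type*} [Fintype n] [DecidableEq n] (U D : Matrix n n ℂ) (r : ℂ) :
    U * (r • 1 - D) * star U = r • (U * star U) - U * D * star U := by
  rw [Matrix.mul_sub, Matrix.sub_mul, Matrix.mul_smul, Matrix.mul_one, Matrix.smul_mul]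

lemma smul_one_sub_posSemidef {n : Type*} [Fintype n] [DecidableEq n]
    {M : Matrix n n ℂ} (hM : M.IsHermitian) {r : ℝ}
    (h : ∀ i, hM.eigenvalues i ≤ r) : ((r : ℂ) • 1 - M).PosSemidef := by
  have hU : (hM.eigenvectorUnitary : Matrix n n ℂ) * star (hM.eigenvectorUnitary : Matrix n n ℂ)
      = 1 := Matrix.mem_unitaryGroup_iff.mp hM.eigenvectorUnitary.2
  have key : (r : ℂ) • 1 - M = (hM.eigenvectorUnitary : Matrix n n ℂ) *
      Matrix.diagonal (fun i => ((r - hM.eigenvalues i : ℝ) : ℂ)) *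
      star (hM.eigenvectorUnitary : Matrix n n ℂ) := by
    conv_lhs => rw [hM.spectral_theorem, Unitary.conjStarAlgAut_apply]
    rw [diag_shift_eq', conj_expand', hU]
  rw [key, Matrix.star_eq_conjTranspose]
  exact (Matrix.posSemidef_diagonal_iff.mpr
    (fun i => Complex.zero_le_real.mpr (by linarith [h i]))).mul_mul_conjTranspose_same _

lemma real_smul_posSemidef {n : Type*} [Fintype n]
    {M : Matrix n n ℂ} (hM : M.PosSemidef) {c : ℝ} (hc : 0 ≤ c) :
    ((c : ℂ) • M).PosSemidef := by
  refine Matrix.PosSemidef.of_dotProduct_mulVec_nonneg ?_ fun x => ?_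
  · simp [Matrix.IsHermitian, Matrix.conjTranspose_smul, hM.1.eq, Complex.star_def,
      Complex.conj_ofReal]
  · rw [Matrix.smul_mulVec, dotProduct_smul, smul_eq_mul]
    exact mul_nonneg (Complex.zero_le_real.mpr hc) (hM.dotProduct_mulVec_nonneg x)

end SpectralAux

/-- Two Hermitian `2 × 2` density matrices with a common nonzero kernel vector coincide. -/
lemma herm_eq_of_common_kernel {ρ₁ ρ₂ : Matrix (Fin 2) (Fin 2) ℂ}
    (h₁ : ρ₁.IsHermitian) (h₂ : ρ₂.IsHermitian)
    (t₁ : ρ₁.trace = 1) (t₂ : ρ₂.trace = 1)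
    {x : Fin 2 → ℂ} (hx : x ≠ 0) (k₁ : ρ₁ *ᵥ x = 0) (k₂ : ρ₂ *ᵥ x = 0) : ρ₁ = ρ₂ := by
  set D := ρ₁ - ρ₂ with hDdef
  have hDh : Dᴴ = D := (h₁.sub h₂)
  have kD : D *ᵥ x = 0 := by rw [hDdef, Matrix.sub_mulVec, k₁, k₂, sub_zero]
  have tD : D.trace = 0 := by rw [hDdef, Matrix.trace_sub, t₁, t₂, sub_self]
  have e0 : D 0 0 * x 0 + D 0 1 * x 1 = 0 := by
    have := congrFun kD 0
    simpa [Matrix.mulVec, dotProduct, Fin.sum_univ_two] using this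
  have e1 : D 1 0 * x 0 + D 1 1 * x 1 = 0 := by
    have := congrFun kD 1
    simpa [Matrix.mulVec, dotProduct, Fin.sum_univ_two] using this
  have ha : (starRingEnd ℂ) (D 0 0) = D 0 0 := by
    have := congrFun (congrFun hDh 0) 0
    simpa [Matrix.conjTranspose_apply] using this
  have hc : D 1 0 = (starRingEnd ℂ) (D 0 1) := by
    have := congrFun (congrFun hDh 1) 0
    simpa [Matrix.conjTranspose_apply] using this.symm
  have htr : D 0 0 + D 1 1 = 0 := by
    simpa [Matrix.trace, Fin.sum_univ_two, Matrix.diag] using tD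
  have hd : D 1 1 = -(D 0 0) := by linear_combination htr
  have ce1 : D 0 1 * (starRingEnd ℂ) (x 0) - D 0 0 * (starRingEnd ℂ) (x 1) = 0 := by
    have h := congrArg (starRingEnd ℂ) e1
    simp only [map_add, _root_.map_mul, map_zero, hc, hd, map_neg, Complex.conj_conj, ha] at h
    linear_combination h
  have n0 := Complex.mul_conj (x 0)
  have n1 := Complex.mul_conj (x 1)
  have key : D 0 0 * ((Complex.normSq (x 0) : ℂ) + (Complex.normSq (x 1) : ℂ)) = 0 := by
    linear_combination (starRingEnd ℂ) (x 0) * e0 - x 1 * ce1 - D 0 0 * n0 - D 0 0 * n1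
  have hor : x 0 ≠ 0 ∨ x 1 ≠ 0 := by
    by_contra h
    push_neg at h
    exact hx (funext fun j => by fin_cases j <;> simp [h.1, h.2])
  have hnz : ((Complex.normSq (x 0) : ℂ) + (Complex.normSq (x 1) : ℂ)) ≠ 0 := by
    have hpos : 0 < Complex.normSq (x 0) + Complex.normSq (x 1) := by
      rcases hor with h | h
      · have := Complex.normSq_pos.mpr h
        have := Complex.normSq_nonneg (x 1)
        linarith
      · have := Complex.normSq_pos.mpr h
        have := Complex.normSq_nonneg (x 0)
        linarith
    rw [← Complex.ofReal_add]
    exact_mod_cast hpos.ne'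
  have ha0 : D 0 0 = 0 := by
    rcases mul_eq_zero.mp key with h | h
    · exact h
    · exact absurd h hnz
  have hb0 : D 0 1 = 0 := by
    rcases hor with h | h
    · have h' : D 0 1 * (starRingEnd ℂ) (x 0) = 0 := by
        linear_combination ce1 + (starRingEnd ℂ) (x 1) * ha0
      rcases mul_eq_zero.mp h' with h'' | h''
      · exact h''
      · exact absurd (by simpa using h'' : x 0 = 0) h
    · have h' : D 0 1 * x 1 = 0 := by linear_combination e0 - x 0 * ha0
      rcases mul_eq_zero.mp h' with h'' | h''
      · exact h''
      · exact absurd h'' h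
  have hD0 : D = 0 := by
    ext j k
    fin_cases j <;> fin_cases k
    · exact ha0
    · exact hb0
    · simp [hc, hb0]
    · simp [hd, ha0]
  exact sub_eq_zero.mp hD0

section TransPAux

variable {V : Type*} [Fintype V] [DecidableEq V] {d : ℕ}

lemma siteEmbed_posSemidef (i : V) {ρ : Matrix (Fin d) (Fin d) ℂ}
    (hρ : ρ.PosSemidef) : (siteEmbed (V := V) i ρ).PosSemidef := by
  obtain ⟨B, rfl⟩ : ∃ B : Matrix (Fin d) (Fin d) ℂ, ρ = Bᴴ * B := by
    open scoped MatrixOrder in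
    simpa [Matrix.star_eq_conjTranspose] using CStarAlgebra.nonneg_iff_eq_star_mul_self.mp hρ.nonneg
  set C : Matrix (Fin d) (V × Fin d) ℂ :=
    Matrix.of (fun (x : Fin d) (a : V × Fin d) => if a.1 = i then B x a.2 else 0) with hC
  have h : siteEmbed (V := V) i (Bᴴ * B) = Cᴴ * C := by
    ext a b
    simp only [siteEmbed, Matrix.mul_apply, Matrix.conjTranspose_apply, hC, Matrix.of_apply]
    by_cases ha : a.1 = i <;> by_cases hb : b.1 = i <;>
      simp [ha, hb, Matrix.mul_apply]
  rw [h]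
  exact Matrix.posSemidef_conjTranspose_mul_self _

lemma psd_diag_re_nonneg {n : Type*} [Fintype n] [DecidableEq n]
    {M : Matrix n n ℂ} (hM : M.PosSemidef) (x : n) : 0 ≤ (M x x).re := by
  have h := hM.dotProduct_mulVec_nonneg (Pi.single x 1)
  have hx : star (Pi.single x 1 : n → ℂ) ⬝ᵥ M *ᵥ Pi.single x 1 = M x x := by
    simp [dotProduct, Matrix.mulVec, Pi.single_apply, mul_ite, ite_mul,
      Finset.sum_ite_eq, Finset.sum_ite_eq']
  rw [hx] at h
  exact (Complex.le_def.mp h).1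

lemma trace_mul_proj_re_nonneg {M : Matrix (V × Fin d) (V × Fin d) ℂ}
    (hM : M.PosSemidef) (j : V) : 0 ≤ ((M * siteProj d j).trace).re := by
  have htr : (M * siteProj d j).trace
      = ∑ x : V × Fin d, M x x * (if x.1 = j then 1 else 0) := by
    simp [Matrix.trace, Matrix.diag, siteProj, Matrix.mul_diagonal]
  rw [htr, Complex.re_sum]
  refine Finset.sum_nonneg fun x _ => ?_
  by_cases hx : x.1 = j
  · simpa [hx] using psd_diag_re_nonneg hM x
  · simp [hx]

lemma transP_add
    (T : ℝ → Matrix (V × Fin d) (V × Fin d) ℂ →ₗ[ℂ] Matrix (V × Fin d) (V × Fin d) ℂ)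
    (j i : V) (ρ τ : Matrix (Fin d) (Fin d) ℂ) (t : ℝ) :
    transP T j i (ρ + τ) t = transP T j i ρ t + transP T j i τ t := by
  have h : siteEmbed (V := V) i (ρ + τ) = siteEmbed i ρ + siteEmbed i τ := by
    ext a b
    simp only [siteEmbed, Matrix.add_apply]
    split <;> simp
  unfold transP
  rw [h, map_add, Matrix.add_mul, Matrix.trace_add, Complex.add_re]

lemma transP_smul
    (T : ℝ → Matrix (V × Fin d) (V × Fin d) ℂ →ₗ[ℂ] Matrix (V × Fin d) (V × Fin d) ℂ)
    (j i : V) (c : ℝ) (ρ : Matrix (Fin d) (Fin d) ℂ) (t : ℝ) :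
    transP T j i ((c : ℂ) • ρ) t = c * transP T j i ρ t := by
  have h : siteEmbed (V := V) i ((c : ℂ) • ρ) = (c : ℂ) • siteEmbed i ρ := by
    ext a b
    simp only [siteEmbed, Matrix.smul_apply]
    split <;> simp
  unfold transP
  rw [h, _root_.map_smul, Matrix.smul_mul, Matrix.trace_smul]
  simp [Complex.re_ofReal_mul, Complex.real_smul]

lemma transP_continuous
    (T : ℝ → Matrix (V × Fin d) (V × Fin d) ℂ →ₗ[ℂ] Matrix (V × Fin d) (V × Fin d) ℂ)
    (hTcont : ∀ X, Continuous fun t => T t X) (j i : V) (ρ : Matrix (Fin d) (Fin d) ℂ) :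
    Continuous fun t => transP T j i ρ t :=
  Complex.continuous_re.comp (((hTcont (siteEmbed i ρ)).matrix_mul continuous_const).matrix_trace)

end TransPAux

/-- If `dim h_i = 2` and the vertex `i` is recurrent for some density, then `i` is
transient for at most one density `ρ`. -/
theorem ctoqw_dim_two_at_most_one_transient_density {V : Type*} [Fintype V] [DecidableEq V]
    (T : ℝ → Matrix (V × Fin 2) (V × Fin 2) ℂ →ₗ[ℂ] Matrix (V × Fin 2) (V × Fin 2) ℂ)
    (hT0 : T 0 = LinearMap.id)
    (hTsemi : ∀ s t : ℝ, 0 ≤ s → 0 ≤ t → T (s + t) = (T s).comp (T t))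
    (hTpos : ∀ t : ℝ, 0 ≤ t → ∀ X, X.PosSemidef → (T t X).PosSemidef)
    (hTtr : ∀ t : ℝ, 0 ≤ t → ∀ X, (T t X).trace = X.trace)
    (hTcont : ∀ X, Continuous fun t => T t X)
    (i : V) (σ : Matrix (Fin 2) (Fin 2) ℂ) (hσ : σ.PosSemidef) (hσ1 : σ.trace = 1)
    (hrec : (∫⁻ t in Set.Ici (0 : ℝ), ENNReal.ofReal (transP T i i σ t)) = ⊤) :
    ∀ ρ₁ ρ₂ : Matrix (Fin 2) (Fin 2) ℂ,
      ρ₁.PosSemidef → ρ₁.trace = 1 → ρ₂.PosSemidef → ρ₂.trace = 1 →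
      (∫⁻ t in Set.Ici (0 : ℝ), ENNReal.ofReal (transP T i i ρ₁ t)) ≠ ⊤ →
      (∫⁻ t in Set.Ici (0 : ℝ), ENNReal.ofReal (transP T i i ρ₂ t)) ≠ ⊤ →
      ρ₁ = ρ₂ := by
  intro ρ₁ ρ₂ h₁ ht₁ h₂ ht₂ hf₁ hf₂
  by_contra hne
  have hA : (ρ₁ + ρ₂).PosSemidef := h₁.add h₂
  have hApd : (ρ₁ + ρ₂).PosDef := by
    refine Matrix.PosDef.of_dotProduct_mulVec_pos hA.1 fun x hx => ?_
    rcases (hA.dotProduct_mulVec_nonneg x).lt_or_eq with hlt | heq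
    · exact hlt
    · exfalso
      have hsum : star x ⬝ᵥ ρ₁ *ᵥ x + star x ⬝ᵥ ρ₂ *ᵥ x = 0 := by
        rw [← dotProduct_add, ← Matrix.add_mulVec]
        exact heq.symm
      have z₁ : star x ⬝ᵥ ρ₁ *ᵥ x = 0 := by
        refine le_antisymm ?_ (h₁.dotProduct_mulVec_nonneg x)
        have h' : star x ⬝ᵥ ρ₁ *ᵥ x = -(star x ⬝ᵥ ρ₂ *ᵥ x) := by linear_combination hsum
        rw [h']
        exact neg_nonpos.mpr (h₂.dotProduct_mulVec_nonneg x)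
      have z₂ : star x ⬝ᵥ ρ₂ *ᵥ x = 0 := by linear_combination hsum - z₁
      exact hne (herm_eq_of_common_kernel h₁.1 h₂.1 ht₁ ht₂ hx
        ((h₁.dotProduct_mulVec_zero_iff x).mp z₁) ((h₂.dotProduct_mulVec_zero_iff x).mp z₂))
  have hAh := hA.1
  set m : ℝ := min (hAh.eigenvalues 0) (hAh.eigenvalues 1) with hm
  have hm0 : 0 < m := lt_min (hApd.eigenvalues_pos 0) (hApd.eigenvalues_pos 1)
  have hA1 : ((ρ₁ + ρ₂) - (m : ℂ) • 1).PosSemidef :=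
    sub_smul_one_posSemidef hAh
      (Fin.forall_fin_two.mpr ⟨min_le_left _ _, min_le_right _ _⟩)
  have hσh := hσ.1
  have hsumev : hσh.eigenvalues 0 + hσh.eigenvalues 1 = 1 := by
    have h := trace_eq_sum_eigenvalues hσh
    rw [hσ1, Fin.sum_univ_two] at h
    have h' : ((hσh.eigenvalues 0 + hσh.eigenvalues 1 : ℝ) : ℂ) = 1 := by
      push_cast
      linear_combination -h
    exact_mod_cast h'
  have hσ1' : (((1 : ℝ) : ℂ) • 1 - σ).PosSemidef := by
    have hnn0 : 0 ≤ hσh.eigenvalues 0 := hσ.eigenvalues_nonneg 0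
    have hnn1 : 0 ≤ hσh.eigenvalues 1 := hσ.eigenvalues_nonneg 1
    exact smul_one_sub_posSemidef hσh
      (Fin.forall_fin_two.mpr ⟨by linarith, by linarith⟩)
  set c : ℝ := m⁻¹ with hcdef
  have hc0 : 0 ≤ c := inv_nonneg.mpr hm0.le
  have hdom : ((c : ℂ) • (ρ₁ + ρ₂) - σ).PosSemidef := by
    have hcm : (c : ℂ) * (m : ℂ) = 1 := by
      rw [← Complex.ofReal_mul, hcdef, inv_mul_cancel₀ hm0.ne']
      norm_num
    have hsplit : (c : ℂ) • (ρ₁ + ρ₂) - σ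
        = (c : ℂ) • ((ρ₁ + ρ₂) - (m : ℂ) • 1) + (((1 : ℝ) : ℂ) • 1 - σ) := by
      rw [smul_sub, smul_smul, hcm]
      push_cast
      abel
    rw [hsplit]
    exact (real_smul_posSemidef hA1 hc0).add hσ1'
  have hbound : ∀ t ∈ Set.Ici (0 : ℝ),
      transP T i i σ t ≤ c * transP T i i ρ₁ t + c * transP T i i ρ₂ t := by
    intro t ht
    have hpos : 0 ≤ transP T i i ((c : ℂ) • (ρ₁ + ρ₂) - σ) t :=
      trace_mul_proj_re_nonneg (hTpos t ht _ (siteEmbed_posSemidef i hdom)) i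
    have hadd : transP T i i σ t + transP T i i ((c : ℂ) • (ρ₁ + ρ₂) - σ) t
        = c * transP T i i ρ₁ t + c * transP T i i ρ₂ t := by
      rw [← transP_add]
      have h' : σ + ((c : ℂ) • (ρ₁ + ρ₂) - σ) = (c : ℂ) • (ρ₁ + ρ₂) := by abel
      rw [h', transP_smul, transP_add, mul_add]
    linarith
  have m₁ : Measurable fun t => ENNReal.ofReal (c * transP T i i ρ₁ t) :=
    (measurable_const.mul (transP_continuous T hTcont i i ρ₁).measurable).ennreal_ofReal
  have m₂ : Measurable fun t => ENNReal.ofReal (c * transP T i i ρ₂ t) :=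
    (measurable_const.mul (transP_continuous T hTcont i i ρ₂).measurable).ennreal_ofReal
  have hle : (∫⁻ t in Set.Ici (0 : ℝ), ENNReal.ofReal (transP T i i σ t)) ≤
      ∫⁻ t in Set.Ici (0 : ℝ), (ENNReal.ofReal (c * transP T i i ρ₁ t)
        + ENNReal.ofReal (c * transP T i i ρ₂ t)) := by
    refine setLIntegral_mono (m₁.add m₂) fun t ht => ?_
    calc ENNReal.ofReal (transP T i i σ t)
        ≤ ENNReal.ofReal (c * transP T i i ρ₁ t + c * transP T i i ρ₂ t) :=
          ENNReal.ofReal_le_ofReal (hbound t ht)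
      _ ≤ _ := ENNReal.ofReal_add_le
  rw [lintegral_add_left m₁] at hle
  have e₁ : (∫⁻ t in Set.Ici (0 : ℝ), ENNReal.ofReal (c * transP T i i ρ₁ t))
      = ENNReal.ofReal c * ∫⁻ t in Set.Ici (0 : ℝ), ENNReal.ofReal (transP T i i ρ₁ t) := by
    simp_rw [ENNReal.ofReal_mul hc0]
    exact lintegral_const_mul' _ _ ENNReal.ofReal_ne_top
  have e₂ : (∫⁻ t in Set.Ici (0 : ℝ), ENNReal.ofReal (c * transP T i i ρ₂ t))
      = ENNReal.ofReal c * ∫⁻ t in Set.Ici (0 : ℝ), ENNReal.ofReal (transP T i i ρ₂ t) := by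
    simp_rw [ENNReal.ofReal_mul hc0]
    exact lintegral_const_mul' _ _ ENNReal.ofReal_ne_top
  rw [e₁, e₂, hrec] at hle
  exact (ENNReal.add_ne_top.mpr
    ⟨ENNReal.mul_ne_top ENNReal.ofReal_ne_top hf₁, ENNReal.mul_ne_top ENNReal.ofReal_ne_top hf₂⟩)
    (top_le_iff.mp hle)
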